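/- Let μ = N(m₁, Σ₁), ν = N(m₂, Σ₂) be Gaussian measures on ℝ^d with Σ₁, Σ₂ positive definite, and consider the SDP: minimize Tr(Z₁) + Tr(Z₂) − 2Tr(Y) over symmetric Z₁, Z₂ and Y ∈ ℝ^{d×d} subject to Z₁ = Σ₁, Z₂ = Σ₂, and [[Z₁, Y],[Yᵀ, Z₂]] ⪰ 0, plus the constant ‖m₁ − m₂‖². Its optimal value equals ‖m₁ − m₂‖² + Tr(Σ₁) + Tr(Σ₂) − 2Tr((Σ₁^{1/2} Σ₂ Σ₁^{1/2})^{1/2}), which is W₂²(μ, ν). -/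

import Mathlib

open Matrix BigOperators

section FrobHelpers

variable {n : Type*} [Fintype n] [DecidableEq n]

/-- Square root of a PSD real matrix (spectral form). -/
noncomputable def Matrix.PosSemidef.sqrt {M : Matrix n n ℝ} (hM : M.PosSemidef) : Matrix n n ℝ :=
  hM.1.eigenvectorUnitary.1 * diagonal ((↑) ∘ (Real.sqrt ·) ∘ hM.1.eigenvalues) *
    (star hM.1.eigenvectorUnitary : Matrix n n ℝ)

lemma Matrix.PosSemidef.posSemidef_sqrt {M : Matrix n n ℝ} (hM : M.PosSemidef) :
    hM.sqrt.PosSemidef := by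
  unfold Matrix.PosSemidef.sqrt
  have hD : (diagonal ((↑) ∘ (Real.sqrt ·) ∘ hM.1.eigenvalues) : Matrix n n ℝ).PosSemidef := by
    rw [posSemidef_diagonal_iff]
    intro i
    simp [Real.sqrt_nonneg]
  exact hD.mul_mul_conjTranspose_same _

lemma Matrix.PosSemidef.sqrt_mul_self {M : Matrix n n ℝ} (hM : M.PosSemidef) :
    hM.sqrt * hM.sqrt = M := by
  have hU : (star hM.1.eigenvectorUnitary : Matrix n n ℝ) * hM.1.eigenvectorUnitary.1 = 1 :=
    Unitary.coe_star_mul_self _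
  have hD : (diagonal ((↑) ∘ (Real.sqrt ·) ∘ hM.1.eigenvalues) : Matrix n n ℝ) *
      diagonal ((↑) ∘ (Real.sqrt ·) ∘ hM.1.eigenvalues) =
      diagonal (RCLike.ofReal ∘ hM.1.eigenvalues) := by
    rw [diagonal_mul_diagonal]
    congr 1
    ext i
    simp [Real.mul_self_sqrt (hM.eigenvalues_nonneg i)]
  conv_rhs => rw [hM.1.spectral_theorem, Unitary.conjStarAlgAut_apply]
  unfold Matrix.PosSemidef.sqrt
  rw [← hD]
  simp only [Matrix.mul_assoc]
  rw [← Matrix.mul_assoc (star _ : Matrix n n ℝ), hU, Matrix.one_mul]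

lemma trace_psd_nonneg' {M : Matrix n n ℝ} (hM : M.PosSemidef) : 0 ≤ M.trace := by
  rw [Matrix.trace]
  apply Finset.sum_nonneg
  intro i _
  have := hM.dotProduct_mulVec_nonneg (Pi.single i 1)
  simpa [dotProduct, mulVec, Pi.single_apply, Finset.sum_ite_eq, Finset.sum_ite_eq'] using this

lemma trace_mul_psd_nonneg' {A B : Matrix n n ℝ} (hA : A.PosSemidef)
    (hB : B.PosSemidef) : 0 ≤ (A * B).trace := by
  set s := hB.sqrt with hs
  have hss : s * s = B := hB.sqrt_mul_self
  have h1 : (A * B).trace = (s * A * s).trace := by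
    rw [← hss, show A * (s * s) = A * s * s by rw [Matrix.mul_assoc],
      Matrix.trace_mul_comm, ← Matrix.mul_assoc]
  rw [h1]
  have := (hA.conjTranspose_mul_mul_same s)
  rw [hB.posSemidef_sqrt.isHermitian.eq] at this
  exact trace_psd_nonneg' this

lemma posDef_conj' {A C : Matrix n n ℝ} (hA : A.PosDef) (hC : IsUnit C.det) :
    (Cᴴ * A * C).PosDef := by
  refine posDef_iff_dotProduct_mulVec.2 ⟨isHermitian_conjTranspose_mul_mul C hA.1, fun x hx => ?_⟩
  have hCx : C *ᵥ x ≠ 0 := by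
    intro h
    apply hx
    have hinj := Matrix.mulVec_injective_iff_isUnit.2 ((Matrix.isUnit_iff_isUnit_det C).2 hC)
    have : C *ᵥ x = C *ᵥ 0 := by simpa using h
    exact hinj this
  simpa only [star_mulVec, dotProduct_mulVec, vecMul_vecMul] using hA.dotProduct_mulVec_pos hCx

lemma psd_posDef_of_isUnit_det' {M : Matrix n n ℝ} (hM : M.PosSemidef)
    (h : IsUnit M.det) : M.PosDef := by
  refine posDef_iff_dotProduct_mulVec.2 ⟨hM.1, fun x hx => ?_⟩
  set s := hM.sqrt with hs
  have hss : s * s = M := hM.sqrt_mul_self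
  have hsx : s *ᵥ x ≠ 0 := by
    intro h0
    apply hx
    have hMx : M *ᵥ x = 0 := by
      rw [← hss, ← Matrix.mulVec_mulVec, h0, Matrix.mulVec_zero]
    have hinj := Matrix.mulVec_injective_iff_isUnit.2 ((Matrix.isUnit_iff_isUnit_det M).2 h)
    have : M *ᵥ x = M *ᵥ 0 := by simpa using hMx
    exact hinj this
  have key : star x ⬝ᵥ (M *ᵥ x) = star (s *ᵥ x) ⬝ᵥ (s *ᵥ x) := by
    rw [← hss, ← Matrix.mulVec_mulVec, dotProduct_mulVec, star_mulVec,
      hM.posSemidef_sqrt.isHermitian.eq]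
  rw [key]
  have := dotProduct_star_self_nonneg (s *ᵥ x)
  rcases lt_or_eq_of_le this with h' | h'
  · simpa [dotProduct_comm] using h'
  · exfalso
    apply hsx
    apply (dotProduct_star_self_eq_zero (v := s *ᵥ x)).1
    rw [dotProduct_comm] at h' ⊢
    exact h'.symm

omit [DecidableEq n] in
lemma trace_fromBlocks'' {m : Type*} [Fintype m] (A : Matrix n n ℝ) (B : Matrix n m ℝ)
    (C : Matrix m n ℝ) (D : Matrix m m ℝ) :
    (Matrix.fromBlocks A B C D).trace = A.trace + D.trace := by
  simp [Matrix.trace, Matrix.diag, Fintype.sum_sum_type, Matrix.fromBlocks]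

lemma sqrt_posDef' {M : Matrix n n ℝ} (hM : M.PosDef) : hM.posSemidef.sqrt.PosDef := by
  apply psd_posDef_of_isUnit_det' hM.posSemidef.posSemidef_sqrt
  have h : hM.posSemidef.sqrt.det * hM.posSemidef.sqrt.det = M.det := by
    rw [← Matrix.det_mul, hM.posSemidef.sqrt_mul_self]
  have hd := hM.det_pos
  refine isUnit_iff_ne_zero.2 fun h0 => ?_
  rw [h0, mul_zero] at h
  exact (hd.ne h).elim

end FrobHelpers

section KeySteps
variable {d : ℕ}

theorem key_ineq' (V₁ V₂ s r Y : Matrix (Fin d) (Fin d) ℝ)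
    (hs : s.PosDef) (hss : s * s = V₁) (hsT : sᵀ = s)
    (hr : r.PosDef) (hrr : r * r = s * V₂ * s)
    (hY : (Matrix.fromBlocks V₁ Y Yᵀ V₂).PosSemidef) :
    Y.trace ≤ r.trace := by
  have hsu : IsUnit s.det := isUnit_iff_ne_zero.2 hs.det_pos.ne'
  have hru : IsUnit r.det := isUnit_iff_ne_zero.2 hr.det_pos.ne'
  have hsinv : s * s⁻¹ = 1 := Matrix.mul_nonsing_inv s hsu
  have hinvs : s⁻¹ * s = 1 := Matrix.nonsing_inv_mul s hsu
  have hrinv : r * r⁻¹ = 1 := Matrix.mul_nonsing_inv r hru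
  set Λ₁ : Matrix (Fin d) (Fin d) ℝ := s⁻¹ * r * s⁻¹ with hΛ₁
  set Λ₂ : Matrix (Fin d) (Fin d) ℝ := s * r⁻¹ * s with hΛ₂
  have hsinvH : (s⁻¹)ᴴ = s⁻¹ := by
    rw [conjTranspose_eq_transpose_of_trivial, Matrix.transpose_nonsing_inv, hsT]
  have hΛ₁pd : Λ₁.PosDef := by
    have := posDef_conj' (C := s⁻¹) hr (Matrix.isUnit_nonsing_inv_det s hsu)
    rwa [hsinvH] at this
  haveI : Invertible Λ₁ := Matrix.invertibleOfIsUnitDet _ (isUnit_iff_ne_zero.2 hΛ₁pd.det_pos.ne')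
  have hΛ₁inv : Λ₁⁻¹ = Λ₂ := by
    rw [hΛ₁, Matrix.mul_inv_rev, Matrix.mul_inv_rev,
      Matrix.nonsing_inv_nonsing_inv s hsu, hΛ₂, Matrix.mul_assoc]
  have hN : (Matrix.fromBlocks Λ₁ (-1 : Matrix (Fin d) (Fin d) ℝ)
      (-1 : Matrix (Fin d) (Fin d) ℝ) Λ₂).PosSemidef := by
    have h := (Matrix.PosDef.fromBlocks₁₁ (-1 : Matrix (Fin d) (Fin d) ℝ) Λ₂ hΛ₁pd).2
    have e : (-1 : Matrix (Fin d) (Fin d) ℝ)ᴴ = -1 := by simp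
    rw [e] at h
    apply h
    have : Λ₂ - (-1 : Matrix (Fin d) (Fin d) ℝ) * Λ₁⁻¹ * (-1) = 0 := by
      rw [hΛ₁inv]; simp
    rw [this]
    exact Matrix.PosSemidef.zero
  have hMN := trace_mul_psd_nonneg' hY hN
  rw [Matrix.fromBlocks_multiply, trace_fromBlocks''] at hMN
  have t1 : (V₁ * Λ₁).trace = r.trace := by
    rw [← hss, hΛ₁]
    have e : s * s * (s⁻¹ * r * s⁻¹) = s * r * s⁻¹ := by
      rw [show s * s * (s⁻¹ * r * s⁻¹) = s * (s * s⁻¹) * r * s⁻¹ by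
        simp only [Matrix.mul_assoc], hsinv, Matrix.mul_one]
    rw [e, Matrix.trace_mul_comm, ← Matrix.mul_assoc, hinvs, Matrix.one_mul]
  have t2 : (V₂ * Λ₂).trace = r.trace := by
    rw [hΛ₂, show V₂ * (s * r⁻¹ * s) = V₂ * s * r⁻¹ * s by simp only [Matrix.mul_assoc],
      Matrix.trace_mul_comm, show s * (V₂ * s * r⁻¹) = s * V₂ * s * r⁻¹ by
        simp only [Matrix.mul_assoc], ← hrr,
      show r * r * r⁻¹ = r * (r * r⁻¹) by simp only [Matrix.mul_assoc], hrinv, Matrix.mul_one]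
  have tY : (Yᵀ).trace = Y.trace := Matrix.trace_transpose Y
  simp only [Matrix.trace_add, Matrix.mul_neg, Matrix.mul_one, Matrix.trace_neg, t1, t2, tY] at hMN
  linarith

theorem attain' (V₁ V₂ s r : Matrix (Fin d) (Fin d) ℝ) (h1 : V₁.PosDef)
    (hs : s.PosDef) (hss : s * s = V₁) (hsT : sᵀ = s)
    (hrr : r * r = s * V₂ * s) (hrT : rᵀ = r) :
    (Matrix.fromBlocks V₁ (s * r * s⁻¹) (s * r * s⁻¹)ᵀ V₂).PosSemidef ∧
      (s * r * s⁻¹).trace = r.trace := by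
  have hsu : IsUnit s.det := isUnit_iff_ne_zero.2 hs.det_pos.ne'
  have h1u : IsUnit V₁.det := isUnit_iff_ne_zero.2 h1.det_pos.ne'
  haveI : Invertible V₁ := Matrix.invertibleOfIsUnitDet _ h1u
  have hYT : (s * r * s⁻¹)ᵀ = s⁻¹ * r * s := by
    rw [Matrix.transpose_mul, Matrix.transpose_mul, Matrix.transpose_nonsing_inv, hsT, hrT,
      Matrix.mul_assoc]
  constructor
  · rw [hYT]
    have hH : (s * r * s⁻¹)ᴴ = s⁻¹ * r * s := by
      rw [conjTranspose_eq_transpose_of_trivial, hYT]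
    have h := (Matrix.PosDef.fromBlocks₁₁ (s * r * s⁻¹) V₂ h1).2
    rw [hH] at h
    apply h
    have hV₁inv : V₁⁻¹ = s⁻¹ * s⁻¹ := by rw [← hss, Matrix.mul_inv_rev]
    have key : s⁻¹ * r * s * V₁⁻¹ * (s * r * s⁻¹) = V₂ := by
      rw [hV₁inv]
      calc s⁻¹ * r * s * (s⁻¹ * s⁻¹) * (s * r * s⁻¹)
          = s⁻¹ * (r * (s * (s⁻¹ * (s⁻¹ * (s * (r * s⁻¹)))))) := by
            simp only [Matrix.mul_assoc]
        _ = s⁻¹ * (r * (s⁻¹ * (s * (r * s⁻¹)))) := by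
            rw [Matrix.mul_nonsing_inv_cancel_left _ _ hsu]
        _ = s⁻¹ * (r * (r * s⁻¹)) := by
            rw [Matrix.nonsing_inv_mul_cancel_left _ _ hsu]
        _ = s⁻¹ * (r * r) * s⁻¹ := by simp only [Matrix.mul_assoc]
        _ = s⁻¹ * (s * V₂ * s) * s⁻¹ := by rw [hrr]
        _ = s⁻¹ * (s * (V₂ * (s * s⁻¹))) := by simp only [Matrix.mul_assoc]
        _ = V₂ := by
            rw [Matrix.mul_nonsing_inv _ hsu, Matrix.mul_one,
              Matrix.nonsing_inv_mul_cancel_left _ _ hsu]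
    rw [key, sub_self]
    exact Matrix.PosSemidef.zero
  · rw [Matrix.trace_mul_comm, ← Matrix.mul_assoc,
      Matrix.nonsing_inv_mul _ hsu, Matrix.one_mul]

end KeySteps

open Classical in
noncomputable def sqrtm {d : ℕ} (A : Matrix (Fin d) (Fin d) ℝ) : Matrix (Fin d) (Fin d) ℝ :=
  if h : A.PosSemidef then
    h.1.eigenvectorUnitary.1 * diagonal ((↑) ∘ (Real.sqrt ·) ∘ h.1.eigenvalues) *
      (star h.1.eigenvectorUnitary : Matrix (Fin d) (Fin d) ℝ)
  else 0

/-- The spectral norm (ℓ²-operator norm) of a real matrix. -/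
noncomputable def specNorm {d : ℕ} (M : Matrix (Fin d) (Fin d) ℝ) : ℝ :=
  ‖LinearMap.toContinuousLinearMap (Matrix.toEuclideanLin M)‖

theorem stmt13 {d : ℕ} (m₁ m₂ : EuclideanSpace ℝ (Fin d))
    (V₁ V₂ : Matrix (Fin d) (Fin d) ℝ) (h1 : V₁.PosDef) (h2 : V₂.PosDef) :
    sInf {v | ∃ Z₁ Z₂ Y : Matrix (Fin d) (Fin d) ℝ,
        Z₁ = V₁ ∧ Z₂ = V₂ ∧ (Matrix.fromBlocks Z₁ Y Yᵀ Z₂).PosSemidef ∧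
        v = ‖m₁ - m₂‖ ^ 2 + Z₁.trace + Z₂.trace - 2 * Y.trace} =
      ‖m₁ - m₂‖ ^ 2 + V₁.trace + V₂.trace
        - 2 * (sqrtm (sqrtm V₁ * V₂ * sqrtm V₁)).trace := by
  have hs_def : sqrtm V₁ = h1.posSemidef.sqrt := dif_pos h1.posSemidef
  rw [hs_def]
  have hs : h1.posSemidef.sqrt.PosDef := sqrt_posDef' h1
  generalize hgen : h1.posSemidef.sqrt = s at *
  have hss : s * s = V₁ := by rw [← hgen]; exact h1.posSemidef.sqrt_mul_self
  have hsT : sᵀ = s := by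
    rw [← conjTranspose_eq_transpose_of_trivial]
    exact hs.isHermitian.eq
  have hsH : sᴴ = s := hs.isHermitian.eq
  have hS : (s * V₂ * s).PosDef := by
    have := posDef_conj' (C := s) h2 (isUnit_iff_ne_zero.2 hs.det_pos.ne')
    rwa [hsH] at this
  have hr_def : sqrtm (s * V₂ * s) = hS.posSemidef.sqrt := dif_pos hS.posSemidef
  rw [hr_def]
  have hr : hS.posSemidef.sqrt.PosDef := sqrt_posDef' hS
  generalize hgen2 : hS.posSemidef.sqrt = r at *
  have hrr : r * r = s * V₂ * s := by rw [← hgen2]; exact hS.posSemidef.sqrt_mul_self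
  have hrT : rᵀ = r := by
    rw [← conjTranspose_eq_transpose_of_trivial]
    exact hr.isHermitian.eq
  obtain ⟨hpsd, htr⟩ := attain' V₁ V₂ s r h1 hs hss hsT hrr hrT
  have hmem : ‖m₁ - m₂‖ ^ 2 + V₁.trace + V₂.trace - 2 * r.trace ∈
      {v | ∃ Z₁ Z₂ Y : Matrix (Fin d) (Fin d) ℝ,
        Z₁ = V₁ ∧ Z₂ = V₂ ∧ (Matrix.fromBlocks Z₁ Y Yᵀ Z₂).PosSemidef ∧
        v = ‖m₁ - m₂‖ ^ 2 + Z₁.trace + Z₂.trace - 2 * Y.trace} :=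
    ⟨V₁, V₂, s * r * s⁻¹, rfl, rfl, hpsd, by rw [htr]⟩
  have hlb : ∀ v ∈ {v | ∃ Z₁ Z₂ Y : Matrix (Fin d) (Fin d) ℝ,
        Z₁ = V₁ ∧ Z₂ = V₂ ∧ (Matrix.fromBlocks Z₁ Y Yᵀ Z₂).PosSemidef ∧
        v = ‖m₁ - m₂‖ ^ 2 + Z₁.trace + Z₂.trace - 2 * Y.trace},
      ‖m₁ - m₂‖ ^ 2 + V₁.trace + V₂.trace - 2 * r.trace ≤ v := by
    rintro v ⟨Z₁, Z₂, Y, rfl, rfl, hY, rfl⟩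
    have := key_ineq' _ _ s r Y hs hss hsT hr hrr hY
    linarith
  exact le_antisymm (csInf_le ⟨_, hlb⟩ hmem) (le_csInf ⟨_, hmem⟩ hlb)
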